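/- arXiv:1601.04980 — 3 statements merged into one kernel-verified Lean document; each statement's English description precedes it below -/
import Mathlib

section
/- Let M be a multi-context system and η a set of integrity constraints over M, and let M' be the MCS obtained from M by adding the extra context C_0 (with kb_0 = ∅, ACC_0(∅) = {∅}, ACC_0({*}) = ∅) and, for each integrity constraint in η, a bridge rule with head (0:*) and the same body. Then M' is logically consistent (has an equilibrium) if and only if M weakly satisfies η. (Hence weak satisfaction of integrity constraints is reducible to logical consistency.) -/
/-- A ground bridge rule `(i : head) ← pos, not neg` of context `i`:
`pos` and `neg` are sets of pairs `(c, p)` meaning "belief `p` queried in context `c`". -/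
structure BridgeRule (ι α : Type*) where
  head : α
  pos : Set (ι × α)
  neg : Set (ι × α)

/-- A ground integrity constraint `← pos, not neg` over an MCS. -/
structure IntegrityConstraint (ι α : Type*) where
  pos : Set (ι × α)
  neg : Set (ι × α)

/-- A context of an MCS: a logic (given by its semantics `ACC`, mapping each
knowledge base to its set of acceptable belief sets), a knowledge base `kb`,
and a set of bridge rules `br`. -/
structure Context (ι α : Type*) where
  ACC : Set α → Set (Set α)
  kb : Set α
  br : Set (BridgeRule ι α)

/-- A multi-context system: a family of contexts indexed by `ι`. -/
abbrev MCS (ι α : Type*) := ι → Context ι α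

/-- A belief state: one belief set per context. -/
abbrev BeliefState (ι α : Type*) := ι → Set α

/-- A bridge rule is applicable in a belief state `S` if every positive body
literal holds in the corresponding belief set and no negative one does. -/
def BridgeRule.applicable {ι α : Type*} (r : BridgeRule ι α) (S : BeliefState ι α) : Prop :=
  (∀ q ∈ r.pos, q.2 ∈ S q.1) ∧ ∀ q ∈ r.neg, q.2 ∉ S q.1

/-- `app M i S`: the heads of the applicable bridge rules of context `i` w.r.t. `S`. -/
def app {ι α : Type*} (M : MCS ι α) (i : ι) (S : BeliefState ι α) : Set α :=
  {a | ∃ r ∈ (M i).br, r.applicable S ∧ r.head = a}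

/-- `S` is an equilibrium of `M` if `S i ∈ ACC_i (kb_i ∪ app_i S)` for every `i`. -/
def IsEquilibrium {ι α : Type*} (M : MCS ι α) (S : BeliefState ι α) : Prop :=
  ∀ i, S i ∈ (M i).ACC ((M i).kb ∪ app M i S)

/-- Logical consistency: existence of an equilibrium. -/
def LogConsistent {ι α : Type*} (M : MCS ι α) : Prop :=
  ∃ S, IsEquilibrium M S

/-- A belief state satisfies an integrity constraint unless all its positive body
literals hold and all its negative body literals fail. -/
def Satisfies {ι α : Type*} (S : BeliefState ι α) (c : IntegrityConstraint ι α) : Prop :=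
  ¬ ((∀ q ∈ c.pos, q.2 ∈ S q.1) ∧ ∀ q ∈ c.neg, q.2 ∉ S q.1)

/-- `M` weakly satisfies `η`: some equilibrium of `M` satisfies every IC in `η`. -/
def WeakSat {ι α : Type*} (M : MCS ι α) (η : Set (IntegrityConstraint ι α)) : Prop :=
  ∃ S, IsEquilibrium M S ∧ ∀ c ∈ η, Satisfies S c

/-- `M` strongly satisfies `η`: `M` is logically consistent and every
equilibrium of `M` satisfies every IC in `η`. -/
def StrongSat {ι α : Type*} (M : MCS ι α) (η : Set (IntegrityConstraint ι α)) : Prop :=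
  LogConsistent M ∧ ∀ S, IsEquilibrium M S → ∀ c ∈ η, Satisfies S c

/-- Relabel a body literal for the extended system (old contexts become `some i`). -/
def liftPair {ι α : Type*} (q : ι × α) : Option ι × α := (some q.1, q.2)

/-- Lift a bridge rule of `M` to the extended system. -/
def liftRule {ι α : Type*} (r : BridgeRule ι α) : BridgeRule (Option ι) α :=
  ⟨r.head, liftPair '' r.pos, liftPair '' r.neg⟩

/-- The bridge rule `(0 : *) ← body of c` obtained from an integrity constraint `c`. -/
def icRule {ι α : Type*} (star : α) (c : IntegrityConstraint ι α) : BridgeRule (Option ι) α :=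
  ⟨star, liftPair '' c.pos, liftPair '' c.neg⟩

/-- The MCS obtained from `M` by adding an extra context `C₀` (index `none`)
with empty knowledge base, semantics `ACC0`, and, for each integrity constraint
in `η`, a bridge rule with head `(0 : *)` and the same body. -/
def extMCS {ι α : Type*} (M : MCS ι α) (η : Set (IntegrityConstraint ι α))
    (star : α) (ACC0 : Set α → Set (Set α)) : MCS (Option ι) α :=
  fun o => match o with
  | some i => ⟨(M i).ACC, (M i).kb, liftRule '' (M i).br⟩
  | none => ⟨ACC0, ∅, icRule star '' η⟩

section Aux
variable {ι α : Type*}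

lemma liftRule_applicable (r : BridgeRule ι α) (S' : BeliefState (Option ι) α) :
    (liftRule r).applicable S' ↔ r.applicable (fun i => S' (some i)) := by
  simp only [liftRule, BridgeRule.applicable, Set.forall_mem_image, liftPair]

lemma icRule_applicable (star : α) (c : IntegrityConstraint ι α)
    (S' : BeliefState (Option ι) α) :
    (icRule star c).applicable S' ↔ ¬ Satisfies (fun i => S' (some i)) c := by
  simp only [icRule, BridgeRule.applicable, Set.forall_mem_image, liftPair, Satisfies, not_not]

lemma app_ext_some (M : MCS ι α) (η : Set (IntegrityConstraint ι α))
    (star : α) (ACC0 : Set α → Set (Set α)) (i : ι) (S' : BeliefState (Option ι) α) :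
    app (extMCS M η star ACC0) (some i) S' = app M i (fun j => S' (some j)) := by
  ext a
  simp only [app, extMCS, Set.mem_setOf_eq, Set.mem_image]
  constructor
  · rintro ⟨r, ⟨r0, hr0, rfl⟩, happ, rfl⟩
    exact ⟨r0, hr0, (liftRule_applicable r0 S').1 happ, rfl⟩
  · rintro ⟨r0, hr0, happ, rfl⟩
    exact ⟨liftRule r0, ⟨r0, hr0, rfl⟩, (liftRule_applicable r0 S').2 happ, rfl⟩

lemma app_ext_none_empty (M : MCS ι α) (η : Set (IntegrityConstraint ι α))
    (star : α) (ACC0 : Set α → Set (Set α)) (S' : BeliefState (Option ι) α)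
    (h : ∀ c ∈ η, Satisfies (fun i => S' (some i)) c) :
    app (extMCS M η star ACC0) none S' = ∅ := by
  ext a
  simp only [app, extMCS, Set.mem_setOf_eq, Set.mem_image, Set.mem_empty_iff_false, iff_false]
  rintro ⟨r, ⟨c, hc, rfl⟩, happ, rfl⟩
  exact ((icRule_applicable star c S').1 happ) (h c hc)

lemma app_ext_none_star (M : MCS ι α) (η : Set (IntegrityConstraint ι α))
    (star : α) (ACC0 : Set α → Set (Set α)) (S' : BeliefState (Option ι) α)
    (h : ¬ ∀ c ∈ η, Satisfies (fun i => S' (some i)) c) :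
    app (extMCS M η star ACC0) none S' = {star} := by
  push_neg at h
  obtain ⟨c, hc, hnc⟩ := h
  ext a
  simp only [app, extMCS, Set.mem_setOf_eq, Set.mem_image, Set.mem_singleton_iff]
  constructor
  · rintro ⟨r, ⟨c', _, rfl⟩, _, rfl⟩; rfl
  · rintro rfl
    exact ⟨icRule _ c, ⟨c, hc, rfl⟩, (icRule_applicable _ c S').2 hnc, rfl⟩

end Aux

/-- `M'` (the extension of `M` by the context `C₀` with
`kb₀ = ∅`, `ACC₀ ∅ = {∅}`, `ACC₀ {*} = ∅`, and a bridge rule `(0:*) ← body r`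
for each `r ∈ η`) is logically consistent iff `M` weakly satisfies `η`. -/
theorem weak_satisfaction_reducible_to_consistency
    {ι α : Type*} (M : MCS ι α) (η : Set (IntegrityConstraint ι α))
    (star : α) (ACC0 : Set α → Set (Set α))
    (hACC0_empty : ACC0 ∅ = {∅}) (hACC0_star : ACC0 {star} = ∅) :
    LogConsistent (extMCS M η star ACC0) ↔ WeakSat M η := by
  constructor
  · rintro ⟨S', hS'⟩
    refine ⟨fun i => S' (some i), fun i => ?_, ?_⟩
    · have := hS' (some i)
      simpa [extMCS, app_ext_some] using this
    · by_contra h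
      have h0 := hS' none
      rw [app_ext_none_star M η star ACC0 S' h] at h0
      simp [extMCS, hACC0_star] at h0
  · rintro ⟨S, hS, hsat⟩
    refine ⟨fun o => Option.elim o ∅ S, fun o => ?_⟩
    match o with
    | some i =>
      have he : (fun j => (fun o : Option ι => Option.elim o ∅ S) (some j)) = S := rfl
      simpa [extMCS, app_ext_some, he] using hS i
    | none =>
      have hsat' : ∀ c ∈ η, Satisfies (fun i => (fun o : Option ι => Option.elim o ∅ S) (some i)) c := hsat
      rw [app_ext_none_empty M η star ACC0 _ hsat']
      simp [extMCS, hACC0_empty]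
end

section
/- Let M be a multi-context system, η a set of integrity constraints over M, and M' the MCS obtained by adding the context C_0 with ACC_0(∅) = {∅}, ACC_0({*}) = ∅ and the bridge rules obtained from η by adding head (0:*). Then the equilibria of M' are exactly the belief states (S_1, ..., S_n, ∅) such that (S_1, ..., S_n) is an equilibrium of M satisfying every integrity constraint in η; in particular, no belief state S' of M' with app_0(S') = {*} is an equilibrium of M'. -/

lemma lift_applicable {ι α : Type*} (r : BridgeRule ι α) (S' : BeliefState (Option ι) α) :
    (liftRule r).applicable S' ↔ r.applicable (fun i => S' (some i)) := by
  simp only [BridgeRule.applicable, liftRule, liftPair, Set.forall_mem_image]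

lemma ic_applicable {ι α : Type*} (star : α) (c : IntegrityConstraint ι α)
    (S' : BeliefState (Option ι) α) :
    (icRule star c).applicable S' ↔ ¬ Satisfies (fun i => S' (some i)) c := by
  simp only [BridgeRule.applicable, icRule, liftPair, Satisfies, Set.forall_mem_image,
    not_not]

lemma app_some {ι α : Type*} (M : MCS ι α) (η : Set (IntegrityConstraint ι α))
    (star : α) (ACC0 : Set α → Set (Set α)) (i : ι) (S' : BeliefState (Option ι) α) :
    app (extMCS M η star ACC0) (some i) S' = app M i (fun j => S' (some j)) := by
  ext a
  simp only [app, extMCS, Set.mem_setOf_eq, Set.mem_image]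
  constructor
  · rintro ⟨r, ⟨r0, hr0, rfl⟩, hap, rfl⟩
    exact ⟨r0, hr0, (lift_applicable r0 S').1 hap, rfl⟩
  · rintro ⟨r0, hr0, hap, rfl⟩
    exact ⟨liftRule r0, ⟨r0, hr0, rfl⟩, (lift_applicable r0 S').2 hap, rfl⟩

lemma app_none_sub {ι α : Type*} (M : MCS ι α) (η : Set (IntegrityConstraint ι α))
    (star : α) (ACC0 : Set α → Set (Set α)) (S' : BeliefState (Option ι) α) :
    app (extMCS M η star ACC0) none S' ⊆ {star} := by
  rintro a ⟨r, ⟨c, hc, rfl⟩, hap, rfl⟩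
  rfl

lemma star_mem_app_none {ι α : Type*} (M : MCS ι α) (η : Set (IntegrityConstraint ι α))
    (star : α) (ACC0 : Set α → Set (Set α)) (S' : BeliefState (Option ι) α) :
    star ∈ app (extMCS M η star ACC0) none S' ↔
      ∃ c ∈ η, ¬ Satisfies (fun i => S' (some i)) c := by
  constructor
  · rintro ⟨r, ⟨c, hc, rfl⟩, hap, -⟩
    exact ⟨c, hc, (ic_applicable star c S').1 hap⟩
  · rintro ⟨c, hc, hv⟩
    exact ⟨icRule star c, ⟨c, hc, rfl⟩, (ic_applicable star c S').2 hv, rfl⟩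

/-- The equilibria of `M'` (with `ACC₀ ∅ = {∅}`, `ACC₀ {*} = ∅`)
are exactly the belief states `(S₁, ..., Sₙ, ∅)` where `(S₁, ..., Sₙ)` is an
equilibrium of `M` satisfying every IC in `η`; in particular no belief state `S'`
with `app₀ S' = {*}` is an equilibrium of `M'`. -/
theorem equilibria_of_weak_extension
    {ι α : Type*} (M : MCS ι α) (η : Set (IntegrityConstraint ι α))
    (star : α) (ACC0 : Set α → Set (Set α))
    (hACC0_empty : ACC0 ∅ = {∅}) (hACC0_star : ACC0 {star} = ∅) :
    (∀ S' : BeliefState (Option ι) α,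
      IsEquilibrium (extMCS M η star ACC0) S' ↔
        (S' none = ∅ ∧ IsEquilibrium M (fun i => S' (some i)) ∧
          ∀ c ∈ η, Satisfies (fun i => S' (some i)) c))
    ∧ ∀ S' : BeliefState (Option ι) α,
        app (extMCS M η star ACC0) none S' = {star} →
          ¬ IsEquilibrium (extMCS M η star ACC0) S' := by
  have main : ∀ S' : BeliefState (Option ι) α,
      IsEquilibrium (extMCS M η star ACC0) S' ↔
        (S' none = ∅ ∧ IsEquilibrium M (fun i => S' (some i)) ∧
          ∀ c ∈ η, Satisfies (fun i => S' (some i)) c) := by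
    intro S'
    constructor
    · intro hE
      have hnone := hE none
      have happ : app (extMCS M η star ACC0) none S' = ∅ := by
        by_contra h
        have hst : app (extMCS M η star ACC0) none S' = {star} := by
          apply Set.Subset.antisymm (app_none_sub M η star ACC0 S')
          rcases Set.nonempty_iff_ne_empty.2 h with ⟨a, ha⟩
          have := app_none_sub M η star ACC0 S' ha
          intro x hx; rw [Set.mem_singleton_iff] at hx this; rw [hx]; exact this ▸ ha
        rw [show (extMCS M η star ACC0 none).kb = ∅ from rfl, hst,
          Set.empty_union, show (extMCS M η star ACC0 none).ACC = ACC0 from rfl,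
          hACC0_star] at hnone
        exact hnone
      have hsat : ∀ c ∈ η, Satisfies (fun i => S' (some i)) c := by
        intro c hc
        by_contra hv
        have : star ∈ app (extMCS M η star ACC0) none S' :=
          (star_mem_app_none M η star ACC0 S').2 ⟨c, hc, hv⟩
        rw [happ] at this; exact this
      refine ⟨?_, ?_, hsat⟩
      · rw [show (extMCS M η star ACC0 none).kb = ∅ from rfl, happ,
          Set.empty_union, show (extMCS M η star ACC0 none).ACC = ACC0 from rfl,
          hACC0_empty] at hnone
        exact hnone
      · intro i
        have := hE (some i)
        rwa [show (extMCS M η star ACC0 (some i)).kb = (M i).kb from rfl,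
          show (extMCS M η star ACC0 (some i)).ACC = (M i).ACC from rfl,
          app_some M η star ACC0 i S'] at this
    · rintro ⟨h0, hEq, hsat⟩ o
      cases o with
      | some i =>
        have := hEq i
        rwa [show (extMCS M η star ACC0 (some i)).kb = (M i).kb from rfl,
          show (extMCS M η star ACC0 (some i)).ACC = (M i).ACC from rfl,
          app_some M η star ACC0 i S']
      | none =>
        have happ : app (extMCS M η star ACC0) none S' = ∅ := by
          apply Set.eq_empty_iff_forall_notMem.2
          intro a ha
          have hs := app_none_sub M η star ACC0 S' ha
          rw [Set.mem_singleton_iff] at hs; rw [hs] at ha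
          rcases (star_mem_app_none M η star ACC0 S').1 ha with ⟨c, hc, hv⟩
          exact hv (hsat c hc)
        rw [show (extMCS M η star ACC0 none).kb = ∅ from rfl, happ,
          Set.empty_union, show (extMCS M η star ACC0 none).ACC = ACC0 from rfl,
          hACC0_empty, h0]
        rfl
  refine ⟨main, ?_⟩
  intro S' hst hE
  rcases (main S').1 hE with ⟨-, -, hsat⟩
  have : star ∈ app (extMCS M η star ACC0) none S' := by rw [hst]; rfl
  rcases (star_mem_app_none M η star ACC0 S').1 this with ⟨c, hc, hv⟩
  exact hv (hsat c hc)
end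

section
/- Let DB be a relational database over a first-order signature Σ and η a set of integrity constraints over DB in denial clausal form. Then the following are equivalent: (i) DB satisfies all integrity constraints in η (in the classical database sense); (ii) the single-context MCS Ctx(DB) strongly satisfies br(η); (iii) Ctx(DB) weakly satisfies br(η), where br translates each denial-form constraint into the corresponding headless MCS integrity constraint. -/
/-- Ground literals over a type `β` of ground atoms: `Sum.inl a` is the atom `a`,
`Sum.inr a` is the negated atom `¬ a`. -/
abbrev Lit (β : Type*) := β ⊕ β

/-- `kb^⊢ = kb ∪ {¬a | a ∉ kb}`: the closed-world closure of a set of ground atoms. -/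
def dbClosure {β : Type*} (kb : Set β) : Set (Lit β) :=
  Sum.inl '' kb ∪ Sum.inr '' kbᶜ

/-- The "database" semantics: a knowledge base (a set of ground atoms, embedded as
positive literals) has exactly one acceptable belief set, its closed-world closure. -/
def dbACC {β : Type*} (kb : Set (Lit β)) : Set (Set (Lit β)) :=
  {dbClosure {a | Sum.inl a ∈ kb}}

/-- `Ctx(DB)`: the single-context MCS generated by a relational database `DB`
(knowledge base `DB`, closed-world semantics, no bridge rules). -/
def CtxDB {β : Type*} (DB : Set β) : MCS Unit (Lit β) :=
  fun _ => ⟨dbACC, Sum.inl '' DB, ∅⟩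

/-- An integrity constraint over a database in denial clausal form,
`∀ (A₁ ∧ ... ∧ A_k ∧ ¬B₁ ∧ ... ∧ ¬B_m → ⊥)`, represented semantically by the
family of its ground instances: `σ` is the type of ground instantiations `θ` of
its variables, and `A θ` (resp. `B θ`) is the set of ground atoms `Aᵢθ` (resp. `Bⱼθ`). -/
structure DenialIC (β σ : Type*) where
  A : σ → Set β
  B : σ → Set β

/-- `DB` satisfies a denial-form constraint: no ground instantiation makes all the
`Aᵢθ` members of `DB` and all the `Bⱼθ` non-members of `DB`. -/
def DBSatisfies {β σ : Type*} (DB : Set β) (r : DenialIC β σ) : Prop :=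
  ∀ θ, ¬ ((∀ a ∈ r.A θ, a ∈ DB) ∧ ∀ b ∈ r.B θ, b ∉ DB)

/-- The ground instance at `θ` of the MCS integrity constraint
`br(r) = ← (1:A₁), ..., (1:A_k), not (1:B₁), ..., not (1:B_m)` over `Ctx(DB)`. -/
def brInst {β σ : Type*} (r : DenialIC β σ) (θ : σ) : IntegrityConstraint Unit (Lit β) :=
  ⟨(fun a => ((), Sum.inl a)) '' r.A θ, (fun b => ((), Sum.inl b)) '' r.B θ⟩

/-- `br(η)`: the set of all ground instances of the translations of the constraints in `η`. -/
def brSet {β σ : Type*} (η : Set (DenialIC β σ)) : Set (IntegrityConstraint Unit (Lit β)) :=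
  {c | ∃ r ∈ η, ∃ θ, c = brInst r θ}

lemma ctx_app {β : Type*} (DB : Set β) (i : Unit) (S : BeliefState Unit (Lit β)) :
    app (CtxDB DB) i S = ∅ := by
  ext a; simp [app, CtxDB]

lemma ctx_equilibrium_iff {β : Type*} (DB : Set β) (S : BeliefState Unit (Lit β)) :
    IsEquilibrium (CtxDB DB) S ↔ S = fun _ => dbClosure DB := by
  constructor
  · intro h
    have h0 := h ()
    rw [ctx_app] at h0
    simp only [CtxDB, dbACC, Set.union_empty, Set.mem_singleton_iff] at h0
    have : {a : β | (Sum.inl a : Lit β) ∈ Sum.inl '' DB} = DB := by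
      ext a; simp
    funext i; cases i
    rw [h0, this]
  · rintro rfl i
    rw [ctx_app]
    simp only [CtxDB, dbACC, Set.union_empty, Set.mem_singleton_iff]
    congr 1
    ext a; simp

lemma inl_mem_closure {β : Type*} (DB : Set β) (a : β) :
    Sum.inl a ∈ dbClosure DB ↔ a ∈ DB := by
  simp [dbClosure]

/-- For a relational database `DB` and a set `η` of integrity
constraints over `DB` in denial clausal form, the following are equivalent:
(i) `DB` satisfies all constraints in `η`; (ii) `Ctx(DB)` strongly satisfies `br(η)`;
(iii) `Ctx(DB)` weakly satisfies `br(η)`. -/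
theorem db_ic_satisfaction_iff
    {β σ : Type*} (DB : Set β) (hfin : DB.Finite) (η : Set (DenialIC β σ)) :
    ((∀ r ∈ η, DBSatisfies DB r) ↔ StrongSat (CtxDB DB) (brSet η))
    ∧ ((∀ r ∈ η, DBSatisfies DB r) ↔ WeakSat (CtxDB DB) (brSet η)) := by
  set S0 : BeliefState Unit (Lit β) := fun _ => dbClosure DB with hS0
  have heq : IsEquilibrium (CtxDB DB) S0 := (ctx_equilibrium_iff DB S0).mpr rfl
  have hsat : (∀ r ∈ η, DBSatisfies DB r) ↔ ∀ c ∈ brSet η, Satisfies S0 c := by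
    constructor
    · rintro h c ⟨r, hr, θ, rfl⟩ ⟨hpos, hneg⟩
      refine h r hr θ ⟨fun a ha => ?_, fun b hb hbDB => ?_⟩
      · have := hpos ((), Sum.inl a) ⟨a, ha, rfl⟩
        exact (inl_mem_closure DB a).mp this
      · exact hneg ((), Sum.inl b) ⟨b, hb, rfl⟩ ((inl_mem_closure DB b).mpr hbDB)
    · intro h r hr θ ⟨hA, hB⟩
      refine h (brInst r θ) ⟨r, hr, θ, rfl⟩ ⟨?_, ?_⟩
      · rintro q ⟨a, ha, rfl⟩
        exact (inl_mem_closure DB a).mpr (hA a ha)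
      · rintro q ⟨b, hb, rfl⟩ hmem
        exact hB b hb ((inl_mem_closure DB b).mp hmem)
  constructor
  · constructor
    · intro h
      refine ⟨⟨S0, heq⟩, fun S hS c hc => ?_⟩
      rw [(ctx_equilibrium_iff DB S).mp hS]
      exact hsat.mp h c hc
    · rintro ⟨_, h⟩
      exact hsat.mpr (fun c hc => h S0 heq c hc)
  · constructor
    · intro h
      exact ⟨S0, heq, hsat.mp h⟩
    · rintro ⟨S, hS, h⟩
      apply hsat.mpr
      rw [(ctx_equilibrium_iff DB S).mp hS] at h
      exact h
end
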